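/- arXiv:2304.07466 — 2 statements merged into one kernel-verified Lean document; each statement's English description precedes it below -/
import Mathlib

section
/- In the normal scale model: let A = 1 (MDPDE case, λ = 0, B = α ∈ (0,1]), σ_m → 0 and σ_{k_m} → 0 with σ_{k_m}/σ_m → 0, and η = 0. Then the ratio M_{φ_{σ_m}} / ∫ φ_{σ_m}^α (φ_{σ_{k_m}})^1 dx converges to (1+α)^{-1/2}, and the resulting breakdown bound min{((B·L)/(1+α))^{1/A}, 1 - (B/(1+α))^{1/A}, 1/2} equals α/(1+α)^{3/2}. -/
open MeasureTheory Real Filter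

lemma ratio_eq_aux (α s t : ℝ) (hα : 0 < α) (hs : 0 < s) (ht : 0 < t) :
    (∫ x : ℝ, ((2 * π * s ^ 2) ^ (-(1 / 2 : ℝ))
        * Real.exp (-x ^ 2 / (2 * s ^ 2))) ^ (1 + α))
    / (∫ x : ℝ, ((2 * π * s ^ 2) ^ (-(1 / 2 : ℝ))
        * Real.exp (-x ^ 2 / (2 * s ^ 2))) ^ α
      * ((2 * π * t ^ 2) ^ (-(1 / 2 : ℝ))
        * Real.exp (-x ^ 2 / (2 * t ^ 2))))
    = Real.sqrt ((1 + α * (t / s) ^ 2) / (1 + α)) := by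
  have hpi := Real.pi_pos
  have hcs : (0:ℝ) < 2 * π * s ^ 2 := by positivity
  have hct : (0:ℝ) < 2 * π * t ^ 2 := by positivity
  set c : ℝ := (2 * π * s ^ 2) ^ (-(1 / 2 : ℝ)) with hc
  set ck : ℝ := (2 * π * t ^ 2) ^ (-(1 / 2 : ℝ)) with hck
  have hcpos : 0 < c := Real.rpow_pos_of_pos hcs _
  have hckpos : 0 < ck := Real.rpow_pos_of_pos hct _
  have hb1 : (0:ℝ) < (1 + α) / (2 * s ^ 2) := by positivity
  have hb2 : (0:ℝ) < α / (2 * s ^ 2) + 1 / (2 * t ^ 2) := by positivity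
  have hnum : (∫ x : ℝ, (c * Real.exp (-x ^ 2 / (2 * s ^ 2))) ^ (1 + α))
      = c ^ (1 + α) * Real.sqrt (π / ((1 + α) / (2 * s ^ 2))) := by
    rw [show (∫ x : ℝ, (c * Real.exp (-x ^ 2 / (2 * s ^ 2))) ^ (1 + α))
        = ∫ x : ℝ, c ^ (1 + α) * Real.exp (-(((1 + α) / (2 * s ^ 2))) * x ^ 2) from by
      congr 1; funext x
      rw [Real.mul_rpow hcpos.le (Real.exp_pos _).le, ← Real.exp_mul]
      congr 1
      field_simp]
    rw [MeasureTheory.integral_const_mul, integral_gaussian]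
  have hden : (∫ x : ℝ, (c * Real.exp (-x ^ 2 / (2 * s ^ 2))) ^ α
      * (ck * Real.exp (-x ^ 2 / (2 * t ^ 2))))
      = c ^ α * ck * Real.sqrt (π / (α / (2 * s ^ 2) + 1 / (2 * t ^ 2))) := by
    rw [show (∫ x : ℝ, (c * Real.exp (-x ^ 2 / (2 * s ^ 2))) ^ α
        * (ck * Real.exp (-x ^ 2 / (2 * t ^ 2))))
        = ∫ x : ℝ, (c ^ α * ck) * Real.exp (-((α / (2 * s ^ 2) + 1 / (2 * t ^ 2))) * x ^ 2) from by
      congr 1; funext x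
      rw [Real.mul_rpow hcpos.le (Real.exp_pos _).le, ← Real.exp_mul,
        show -((α / (2 * s ^ 2) + 1 / (2 * t ^ 2))) * x ^ 2
          = (-x ^ 2 / (2 * s ^ 2) * α) + (-x ^ 2 / (2 * t ^ 2)) from by field_simp; ring,
        Real.exp_add]
      ring]
    rw [MeasureTheory.integral_const_mul, integral_gaussian]
  rw [hnum, hden]
  have hca : c ^ (1 + α) = c ^ α * c := by
    rw [add_comm, Real.rpow_add hcpos, Real.rpow_one]
  rw [hca]
  have hcαne : c ^ α ≠ 0 := (Real.rpow_pos_of_pos hcpos α).ne'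
  rw [mul_assoc, mul_assoc, mul_div_mul_left _ _ hcαne]
  have hcv : c = (Real.sqrt (2 * π * s ^ 2))⁻¹ := by
    rw [hc, Real.rpow_neg hcs.le, Real.sqrt_eq_rpow]
  have hckv : ck = (Real.sqrt (2 * π * t ^ 2))⁻¹ := by
    rw [hck, Real.rpow_neg hct.le, Real.sqrt_eq_rpow]
  rw [hcv, hckv]
  have hsCs : 0 < Real.sqrt (2 * π * s ^ 2) := Real.sqrt_pos.mpr hcs
  have hsCt : 0 < Real.sqrt (2 * π * t ^ 2) := Real.sqrt_pos.mpr hct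
  have h1 : ((Real.sqrt (2 * π * s ^ 2))⁻¹ * Real.sqrt (π / ((1 + α) / (2 * s ^ 2))))
      / ((Real.sqrt (2 * π * t ^ 2))⁻¹ * Real.sqrt (π / (α / (2 * s ^ 2) + 1 / (2 * t ^ 2))))
      = (Real.sqrt (2 * π * t ^ 2) * Real.sqrt (π / ((1 + α) / (2 * s ^ 2))))
      / (Real.sqrt (2 * π * s ^ 2) * Real.sqrt (π / (α / (2 * s ^ 2) + 1 / (2 * t ^ 2)))) := by
    field_simp
  rw [h1, ← Real.sqrt_mul hct.le, ← Real.sqrt_mul hcs.le, ← Real.sqrt_div (by positivity)]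
  congr 1
  rw [div_eq_div_iff (by positivity) (by positivity)]
  field_simp
  ring

/-- Normal scale model, MDPDE case (`A = 1`, `B = α`), contamination by
mean-zero normals with `σ_{k_m}/σ_m → 0`: the ratio
`M_{φ_{σ_m}} / ∫ φ_{σ_m}^α φ_{σ_{k_m}}` converges to `(1+α)^{-1/2}`, and the
breakdown bound `min{((B·L)/(1+α))^{1/A}, 1 - (B/(1+α))^{1/A}, 1/2}` equals
`α/(1+α)^{3/2}`. -/
theorem normal_scale_mdpde_breakdown (α : ℝ) (hα0 : 0 < α) (hα1 : α ≤ 1)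
    (σ σk : ℕ → ℝ) (hσ : ∀ m, 0 < σ m) (hσk : ∀ m, 0 < σk m)
    (hσ0 : Tendsto σ atTop (nhds 0)) (hσk0 : Tendsto σk atTop (nhds 0))
    (hratio : Tendsto (fun m => σk m / σ m) atTop (nhds 0)) :
    Tendsto (fun m =>
        (∫ x : ℝ, ((2 * π * (σ m) ^ 2) ^ (-(1 / 2 : ℝ))
            * Real.exp (-x ^ 2 / (2 * (σ m) ^ 2))) ^ (1 + α))
        / (∫ x : ℝ, ((2 * π * (σ m) ^ 2) ^ (-(1 / 2 : ℝ))
            * Real.exp (-x ^ 2 / (2 * (σ m) ^ 2))) ^ α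
          * ((2 * π * (σk m) ^ 2) ^ (-(1 / 2 : ℝ))
            * Real.exp (-x ^ 2 / (2 * (σk m) ^ 2)))))
      atTop (nhds ((1 + α) ^ (-(1 / 2 : ℝ)))) ∧
    min (min ((α * (1 + α) ^ (-(1 / 2 : ℝ)) / (1 + α)) ^ (1 / (1 : ℝ)))
          (1 - (α / (1 + α)) ^ (1 / (1 : ℝ)))) (1 / 2)
      = α * (1 + α) ^ (-(3 / 2 : ℝ)) := by
  have h1α : (0:ℝ) < 1 + α := by linarith
  constructor
  · have heq : (fun m =>
        (∫ x : ℝ, ((2 * π * (σ m) ^ 2) ^ (-(1 / 2 : ℝ))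
            * Real.exp (-x ^ 2 / (2 * (σ m) ^ 2))) ^ (1 + α))
        / (∫ x : ℝ, ((2 * π * (σ m) ^ 2) ^ (-(1 / 2 : ℝ))
            * Real.exp (-x ^ 2 / (2 * (σ m) ^ 2))) ^ α
          * ((2 * π * (σk m) ^ 2) ^ (-(1 / 2 : ℝ))
            * Real.exp (-x ^ 2 / (2 * (σk m) ^ 2)))))
        = fun m => Real.sqrt ((1 + α * (σk m / σ m) ^ 2) / (1 + α)) := by
      funext m
      exact ratio_eq_aux α (σ m) (σk m) hα0 (hσ m) (hσk m)
    rw [heq]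
    have hlim : Tendsto (fun m => (1 + α * (σk m / σ m) ^ 2) / (1 + α)) atTop
        (nhds ((1 + α * 0 ^ 2) / (1 + α))) :=
      (((hratio.pow 2).const_mul α).const_add 1).div_const (1 + α)
    have := (Real.continuous_sqrt.continuousAt.tendsto).comp hlim
    simp only [Function.comp_def] at this
    convert this using 2
    rw [Real.rpow_neg h1α.le, ← Real.sqrt_eq_rpow, ← Real.sqrt_inv]
    norm_num
  · have hP : (0:ℝ) < (1 + α) ^ (-(3 / 2 : ℝ)) := Real.rpow_pos_of_pos h1α _
    have hsplit : (1 + α) ^ (-(3 / 2 : ℝ)) = (1 + α) ^ (-(1 / 2 : ℝ)) * (1 + α)⁻¹ := by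
      rw [← Real.rpow_neg_one (1 + α), ← Real.rpow_add h1α]; norm_num
    have ht1 : α * (1 + α) ^ (-(1 / 2 : ℝ)) / (1 + α) = α * (1 + α) ^ (-(3 / 2 : ℝ)) := by
      rw [hsplit]; field_simp
    have hsqrt1 : (1:ℝ) ≤ Real.sqrt (1 + α) := by
      nlinarith [Real.sq_sqrt (show (0:ℝ) ≤ 1 + α by linarith), Real.sqrt_nonneg (1 + α)]
    have hkey : (1 + α) ^ ((1:ℝ)/2) * (1 + α) ^ (-(3 / 2 : ℝ)) = (1 + α)⁻¹ := by
      rw [← Real.rpow_neg_one (1 + α), ← Real.rpow_add h1α]; norm_num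
    have hle2 : α * (1 + α) ^ (-(3 / 2 : ℝ)) ≤ 1 - α / (1 + α) := by
      have h2 : 1 - α / (1 + α) = (1 + α)⁻¹ := by field_simp; ring
      rw [h2, ← hkey]
      apply mul_le_mul_of_nonneg_right _ hP.le
      calc α ≤ 1 := hα1
        _ ≤ Real.sqrt (1 + α) := hsqrt1
        _ = (1 + α) ^ ((1:ℝ)/2) := Real.sqrt_eq_rpow _
    have hle3 : α * (1 + α) ^ (-(3 / 2 : ℝ)) ≤ 1 / 2 := by
      have h32 : (1 + α) ≤ (1 + α) ^ ((3:ℝ)/2) := by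
        nth_rewrite 1 [← Real.rpow_one (1 + α)]
        exact Real.rpow_le_rpow_of_exponent_le (by linarith) (by norm_num)
      have h2a : 2 * α ≤ (1 + α) ^ ((3:ℝ)/2) := by linarith
      have hcancel : (1 + α) ^ ((3:ℝ)/2) * (1 + α) ^ (-(3 / 2 : ℝ)) = 1 := by
        rw [← Real.rpow_add h1α]; norm_num
      have := mul_le_mul_of_nonneg_right h2a hP.le
      rw [hcancel] at this
      linarith
    rw [show (1 / (1:ℝ)) = 1 by norm_num, Real.rpow_one, Real.rpow_one, ht1]
    rw [min_eq_left hle2, min_eq_left hle3]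
end

section
/- Let 0 ≤ α < 1 and λ ∈ ℝ with A = 1 + λ(1-α) ∈ (0,1) and B = α - λ(1-α) > 0. Suppose σ_m, τ_m > 0 with τ_m/σ_m → 0 and η ≠ 0 fixed or η = 0. Then the ratio M_{φ_{0,σ_m}} / ∫ φ_{0,σ_m}^B φ_{η,τ_m}^A dx = σ_m^{-A} τ_m^{A-1} ((Bτ_m² + Aσ_m²)/(1+α))^{1/2} exp(ABη²/(2(Bτ_m² + Aσ_m²))) tends to +∞ as m → ∞ (whenever σ_m is bounded). -/
open MeasureTheory Real Filter

lemma gauss_int (b c d K : ℝ) :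
    ∫ x : ℝ, K * Real.exp (-(b * (x - c) ^ 2) + d)
      = K * Real.exp d * Real.sqrt (π / b) := by
  have h1 : ∀ x : ℝ, K * Real.exp (-(b * (x - c) ^ 2) + d)
      = (K * Real.exp d) * Real.exp (-b * (x - c) ^ 2) := by
    intro x; rw [Real.exp_add]; ring_nf
  simp_rw [h1]
  rw [MeasureTheory.integral_const_mul]
  have h2 : ∫ x : ℝ, Real.exp (-b * (x - c) ^ 2) = ∫ x : ℝ, Real.exp (-b * x ^ 2) :=
    integral_sub_right_eq_self (fun x => Real.exp (-b * x ^ 2)) c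
  rw [h2, integral_gaussian]

lemma num_eval (α s : ℝ) (hα : 0 ≤ α) (hs : 0 < s) :
    ∫ x : ℝ, ((2 * π * s ^ 2) ^ (-(1 / 2 : ℝ)) * Real.exp (-x ^ 2 / (2 * s ^ 2))) ^ (1 + α)
      = (2 * π * s ^ 2) ^ (-(1 / 2 : ℝ) * (1 + α)) * Real.sqrt (π / ((1 + α) / (2 * s ^ 2))) := by
  have hP : (0 : ℝ) < 2 * π * s ^ 2 := by positivity
  have h1 : ∀ x : ℝ, ((2 * π * s ^ 2) ^ (-(1 / 2 : ℝ)) * Real.exp (-x ^ 2 / (2 * s ^ 2))) ^ (1 + α)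
      = (2 * π * s ^ 2) ^ (-(1 / 2 : ℝ) * (1 + α))
        * Real.exp (-(((1 + α) / (2 * s ^ 2)) * (x - 0) ^ 2) + 0) := by
    intro x
    rw [Real.mul_rpow (by positivity) (Real.exp_pos _).le, ← Real.rpow_mul hP.le,
      ← Real.exp_mul]
    congr 2
    have h2s : (2 * s ^ 2) ≠ 0 := by positivity
    field_simp
    ring
  simp_rw [h1]
  rw [gauss_int, Real.exp_zero, mul_one]

lemma den_eval (A B η s t : ℝ) (hA : 0 < A) (hB : 0 < B) (hs : 0 < s) (ht : 0 < t) :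
    ∫ x : ℝ, ((2 * π * s ^ 2) ^ (-(1 / 2 : ℝ)) * Real.exp (-x ^ 2 / (2 * s ^ 2))) ^ B
        * ((2 * π * t ^ 2) ^ (-(1 / 2 : ℝ)) * Real.exp (-(x - η) ^ 2 / (2 * t ^ 2))) ^ A
      = (2 * π * s ^ 2) ^ (-(1 / 2 : ℝ) * B) * (2 * π * t ^ 2) ^ (-(1 / 2 : ℝ) * A)
        * Real.exp (-(A * B * η ^ 2 / (2 * (B * t ^ 2 + A * s ^ 2))))
        * Real.sqrt (π / ((B * t ^ 2 + A * s ^ 2) / (2 * s ^ 2 * t ^ 2))) := by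
  have hPs : (0 : ℝ) < 2 * π * s ^ 2 := by positivity
  have hPt : (0 : ℝ) < 2 * π * t ^ 2 := by positivity
  have hQ : (0 : ℝ) < B * t ^ 2 + A * s ^ 2 := by positivity
  have h1 : ∀ x : ℝ, ((2 * π * s ^ 2) ^ (-(1 / 2 : ℝ)) * Real.exp (-x ^ 2 / (2 * s ^ 2))) ^ B
        * ((2 * π * t ^ 2) ^ (-(1 / 2 : ℝ)) * Real.exp (-(x - η) ^ 2 / (2 * t ^ 2))) ^ A
      = ((2 * π * s ^ 2) ^ (-(1 / 2 : ℝ) * B) * (2 * π * t ^ 2) ^ (-(1 / 2 : ℝ) * A))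
        * Real.exp (-((((B * t ^ 2 + A * s ^ 2) / (2 * s ^ 2 * t ^ 2)))
              * (x - A * η * s ^ 2 / (B * t ^ 2 + A * s ^ 2)) ^ 2)
            + -(A * B * η ^ 2 / (2 * (B * t ^ 2 + A * s ^ 2)))) := by
    intro x
    rw [Real.mul_rpow (by positivity) (Real.exp_pos _).le,
      Real.mul_rpow (by positivity) (Real.exp_pos _).le,
      ← Real.rpow_mul hPs.le, ← Real.rpow_mul hPt.le,
      ← Real.exp_mul, ← Real.exp_mul]
    rw [show ∀ a b c d : ℝ, a * b * (c * d) = (a * c) * (b * d) by intros; ring,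
      ← Real.exp_add]
    congr 2
    have h2s : (2 * s ^ 2) ≠ 0 := by positivity
    have h2t : (2 * t ^ 2) ≠ 0 := by positivity
    have hQ' : (B * t ^ 2 + A * s ^ 2) ≠ 0 := ne_of_gt hQ
    field_simp
    ring
  simp_rw [h1]
  rw [gauss_int]

lemma ratio_eq (α A B η s t : ℝ) (hα0 : 0 ≤ α) (hsum : A + B = 1 + α)
    (hA0 : 0 < A) (hB : 0 < B) (hs : 0 < s) (ht : 0 < t) :
    ((2 * π * s ^ 2) ^ (-(1 / 2 : ℝ) * (1 + α)) * Real.sqrt (π / ((1 + α) / (2 * s ^ 2))))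
      / ((2 * π * s ^ 2) ^ (-(1 / 2 : ℝ) * B) * (2 * π * t ^ 2) ^ (-(1 / 2 : ℝ) * A)
        * Real.exp (-(A * B * η ^ 2 / (2 * (B * t ^ 2 + A * s ^ 2))))
        * Real.sqrt (π / ((B * t ^ 2 + A * s ^ 2) / (2 * s ^ 2 * t ^ 2))))
      = s ^ (-A) * t ^ (A - 1) * ((B * t ^ 2 + A * s ^ 2) / (1 + α)) ^ ((1 : ℝ) / 2)
        * Real.exp (A * B * η ^ 2 / (2 * (B * t ^ 2 + A * s ^ 2))) := by
  have hα1 : (0:ℝ) < 1 + α := by linarith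
  have hQ : (0 : ℝ) < B * t ^ 2 + A * s ^ 2 := by positivity
  have e1 : π / ((1 + α) / (2 * s ^ 2)) = 2 * π * s ^ 2 / (1 + α) := by
    field_simp
  have e2 : π / ((B * t ^ 2 + A * s ^ 2) / (2 * s ^ 2 * t ^ 2))
      = 2 * π * s ^ 2 * t ^ 2 / (B * t ^ 2 + A * s ^ 2) := by
    field_simp
  rw [e1, e2, Real.sqrt_eq_rpow, Real.sqrt_eq_rpow]
  rw [Real.rpow_def_of_pos (by positivity : (0:ℝ) < 2 * π * s ^ 2),
    Real.rpow_def_of_pos (by positivity : (0:ℝ) < 2 * π * s ^ 2),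
    Real.rpow_def_of_pos (by positivity : (0:ℝ) < 2 * π * t ^ 2),
    Real.rpow_def_of_pos (by positivity : (0:ℝ) < 2 * π * s ^ 2 / (1 + α)),
    Real.rpow_def_of_pos (by positivity : (0:ℝ) < 2 * π * s ^ 2 * t ^ 2 / (B * t ^ 2 + A * s ^ 2)),
    Real.rpow_def_of_pos hs, Real.rpow_def_of_pos ht,
    Real.rpow_def_of_pos (by positivity : (0:ℝ) < (B * t ^ 2 + A * s ^ 2) / (1 + α))]
  rw [← Real.exp_add, ← Real.exp_add, ← Real.exp_add, ← Real.exp_add, ← Real.exp_sub,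
    ← Real.exp_add, ← Real.exp_add, ← Real.exp_add]
  rw [Real.exp_eq_exp]
  have l1 : Real.log (2 * π * s ^ 2) = Real.log (2 * π) + 2 * Real.log s := by
    rw [Real.log_mul (by positivity) (by positivity), Real.log_pow]; push_cast; ring
  have l2 : Real.log (2 * π * t ^ 2) = Real.log (2 * π) + 2 * Real.log t := by
    rw [Real.log_mul (by positivity) (by positivity), Real.log_pow]; push_cast; ring
  have l3 : Real.log (2 * π * s ^ 2 / (1 + α))
      = Real.log (2 * π) + 2 * Real.log s - Real.log (1 + α) := by
    rw [Real.log_div (by positivity) (ne_of_gt hα1), l1]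
  have l4 : Real.log (2 * π * s ^ 2 * t ^ 2 / (B * t ^ 2 + A * s ^ 2))
      = Real.log (2 * π) + 2 * Real.log s + 2 * Real.log t
        - Real.log (B * t ^ 2 + A * s ^ 2) := by
    rw [Real.log_div (by positivity) (ne_of_gt hQ),
      Real.log_mul (by positivity) (by positivity), l1, Real.log_pow]; push_cast; ring
  have l5 : Real.log ((B * t ^ 2 + A * s ^ 2) / (1 + α))
      = Real.log (B * t ^ 2 + A * s ^ 2) - Real.log (1 + α) := by
    rw [Real.log_div (ne_of_gt hQ) (ne_of_gt hα1)]
  rw [l1, l2, l3, l4, l5]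
  have hB' : B = 1 + α - A := by linarith
  subst hB'
  ring

lemma tendsto_part (α A B η : ℝ) (hα0 : 0 ≤ α) (hA0 : 0 < A) (hA1 : A < 1) (hB : 0 < B)
    (σ τ : ℕ → ℝ) (hσ : ∀ m, 0 < σ m) (hτ : ∀ m, 0 < τ m)
    (hratio : Tendsto (fun m => τ m / σ m) atTop (nhds 0)) :
    Tendsto (fun m =>
        (σ m) ^ (-A) * (τ m) ^ (A - 1)
          * ((B * (τ m) ^ 2 + A * (σ m) ^ 2) / (1 + α)) ^ ((1 : ℝ) / 2)
          * Real.exp (A * B * η ^ 2 / (2 * (B * (τ m) ^ 2 + A * (σ m) ^ 2))))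
      atTop atTop := by
  have hα1 : (0:ℝ) < 1 + α := by linarith
  set c : ℝ := Real.sqrt (A / (1 + α)) with hc
  have hcpos : 0 < c := Real.sqrt_pos.mpr (by positivity)
  have h1 : Tendsto (fun m => τ m / σ m) atTop (nhdsWithin 0 (Set.Ioi 0)) := by
    rw [tendsto_nhdsWithin_iff]
    exact ⟨hratio, Eventually.of_forall fun m => div_pos (hτ m) (hσ m)⟩
  have h2 : Tendsto (fun x : ℝ => x ^ (A - 1)) (nhdsWithin 0 (Set.Ioi 0)) atTop := by
    have := (tendsto_rpow_atTop (by linarith : (0:ℝ) < 1 - A)).comp tendsto_inv_nhdsGT_zero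
    refine this.congr' ?_
    filter_upwards [self_mem_nhdsWithin] with x (hx : 0 < x)
    simp only [Function.comp]
    rw [Real.inv_rpow hx.le, ← Real.rpow_neg hx.le, show -(1 - A) = A - 1 by ring]
  have h3 : Tendsto (fun m => c * (τ m / σ m) ^ (A - 1)) atTop atTop :=
    (h2.comp h1).const_mul_atTop hcpos
  refine tendsto_atTop_mono (fun m => ?_) h3
  set s := σ m with hsdef
  set t := τ m with htdef
  have hs : 0 < s := hσ m
  have ht : 0 < t := hτ m
  have hQ : (0:ℝ) < B * t ^ 2 + A * s ^ 2 := by positivity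
  have hss : s ^ (-A) * s = (s ^ (A - 1))⁻¹ := by
    calc s ^ (-A) * s = s ^ (-A) * s ^ (1:ℝ) := by rw [Real.rpow_one]
      _ = s ^ (-A + 1) := (Real.rpow_add hs _ _).symm
      _ = (s ^ (A-1))⁻¹ := by
          rw [← Real.rpow_neg hs.le, show -(A-1) = -A+1 by ring]
  have key : c * (t / s) ^ (A - 1)
      = s ^ (-A) * t ^ (A - 1) * ((A * s ^ 2 / (1 + α)) ^ ((1:ℝ)/2)) * 1 := by
    rw [← Real.sqrt_eq_rpow, show A * s ^ 2 / (1 + α) = (A / (1 + α)) * s ^ 2 by ring,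
      Real.sqrt_mul (by positivity), Real.sqrt_sq hs.le, Real.div_rpow ht.le hs.le]
    rw [show s ^ (-A) * t ^ (A-1) * (c * s) * 1 = (s ^ (-A) * s) * t ^ (A-1) * c by ring, hss]
    field_simp
  rw [key]
  gcongr
  · nlinarith [mul_nonneg hB.le (sq_nonneg t)]
  · exact Real.one_le_exp (by positivity)

/-- Normal scale model with `0 < A < 1`: the ratio
`M_{φ_{0,σ_m}} / ∫ φ_{0,σ_m}^B φ_{η,τ_m}^A` equals the closed form
`σ_m^{-A} τ_m^{A-1} ((Bτ_m² + Aσ_m²)/(1+α))^{1/2} exp(ABη²/(2(Bτ_m² + Aσ_m²)))`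
and tends to `+∞` whenever `τ_m/σ_m → 0` and `σ_m` is bounded. -/
theorem normal_scale_ratio_tendsto_top (α A B η : ℝ)
    (hα0 : 0 ≤ α) (hα1 : α < 1) (hA0 : 0 < A) (hA1 : A < 1) (hB : 0 < B)
    (hAdef : ∃ lam : ℝ, A = 1 + lam * (1 - α) ∧ B = α - lam * (1 - α))
    (σ τ : ℕ → ℝ) (hσ : ∀ m, 0 < σ m) (hτ : ∀ m, 0 < τ m)
    (hratio : Tendsto (fun m => τ m / σ m) atTop (nhds 0))
    (hbound : ∃ C : ℝ, ∀ m, σ m ≤ C) :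
    (∀ m,
      (∫ x : ℝ, ((2 * π * (σ m) ^ 2) ^ (-(1 / 2 : ℝ))
          * Real.exp (-x ^ 2 / (2 * (σ m) ^ 2))) ^ (1 + α))
      / (∫ x : ℝ, ((2 * π * (σ m) ^ 2) ^ (-(1 / 2 : ℝ))
            * Real.exp (-x ^ 2 / (2 * (σ m) ^ 2))) ^ B
          * ((2 * π * (τ m) ^ 2) ^ (-(1 / 2 : ℝ))
            * Real.exp (-(x - η) ^ 2 / (2 * (τ m) ^ 2))) ^ A)
      = (σ m) ^ (-A) * (τ m) ^ (A - 1)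
          * ((B * (τ m) ^ 2 + A * (σ m) ^ 2) / (1 + α)) ^ ((1 : ℝ) / 2)
          * Real.exp (A * B * η ^ 2 / (2 * (B * (τ m) ^ 2 + A * (σ m) ^ 2)))) ∧
    Tendsto (fun m =>
        (σ m) ^ (-A) * (τ m) ^ (A - 1)
          * ((B * (τ m) ^ 2 + A * (σ m) ^ 2) / (1 + α)) ^ ((1 : ℝ) / 2)
          * Real.exp (A * B * η ^ 2 / (2 * (B * (τ m) ^ 2 + A * (σ m) ^ 2))))
      atTop atTop := by
  obtain ⟨lam, hAeq, hBeq⟩ := hAdef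
  have hsum : A + B = 1 + α := by rw [hAeq, hBeq]; ring
  refine ⟨fun m => ?_, tendsto_part α A B η hα0 hA0 hA1 hB σ τ hσ hτ hratio⟩
  rw [num_eval α (σ m) hα0 (hσ m), den_eval A B η (σ m) (τ m) hA0 hB (hσ m) (hτ m)]
  exact ratio_eq α A B η (σ m) (τ m) hα0 hsum hA0 hB (hσ m) (hτ m)
end
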